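/- Let G=(V,E,w) be a weighted graph with total edge weight m, k a positive integer, and let U be the uniform distribution over all 2^|V| cuts. Then for every k-subset F, E_{S∼U}[C_{S−F,G−F}] = (m − d(F))/2 ≥ (m − Δ_k)/2. Therefore μ(U,k,G) ≥ (1/2)·max_D μ(D,k,G), i.e., the uniform distribution is a 1/2-approximation for k-OFTcut. -/

import Mathlib

open Finset

noncomputable section

variable {V : Type*} [Fintype V] [DecidableEq V]

/-- Total weight of edges crossing the cut `S` (each unordered crossing edge counted once). -/
def cutW (w : V → V → ℝ) (S : Finset V) : ℝ :=
  ∑ u ∈ S, ∑ v ∈ Sᶜ, w u v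

/-- Weighted degree of a vertex. -/
def degW (w : V → V → ℝ) (v : V) : ℝ := ∑ u, w v u

/-- Total weight of crossing edges incident to `v`. -/
def crossDegW (w : V → V → ℝ) (S : Finset V) (v : V) : ℝ :=
  ∑ u, if (v ∈ S ∧ u ∉ S) ∨ (u ∈ S ∧ v ∉ S) then w v u else 0

/-- Total weight of crossing edges incident to at least one vertex of `F`. -/
def crossDegSetW (w : V → V → ℝ) (S F : Finset V) : ℝ :=
  ∑ u ∈ S, ∑ v ∈ Sᶜ, if u ∈ F ∨ v ∈ F then w u v else 0

/-- Weight of edges crossing `S` that avoid `F`: the cut `S − F` in `G − F`. -/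
def cutMinusW (w : V → V → ℝ) (S F : Finset V) : ℝ :=
  ∑ u ∈ S, ∑ v ∈ Sᶜ, if u ∉ F ∧ v ∉ F then w u v else 0

/-- The cut obtained from `S` by moving `v` to the opposite side. -/
def flipCut (S : Finset V) (v : V) : Finset V :=
  if v ∈ S then S.erase v else insert v S

/-- The k-fault-tolerant value of the cut `S` against an adaptive adversary. -/
noncomputable def ftValW (w : V → V → ℝ) (S : Finset V) (k : ℕ) : ℝ :=
  sInf ((fun F => cutMinusW w S F) '' {F : Finset V | F.card = k})

/-- The single-fault FT value of the cut `S`. -/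
noncomputable def ft1W (w : V → V → ℝ) (S : Finset V) : ℝ :=
  sInf (Set.range fun v => cutMinusW w S {v})

/-- Total edge weight of the graph. -/
def totalW (w : V → V → ℝ) : ℝ := (∑ u, ∑ v, w u v) / 2

/-- Maximum weighted degree. -/
noncomputable def maxDegW (w : V → V → ℝ) : ℝ := sSup (Set.range (degW w))

/-- Total weight of edges incident to at least one vertex of `F`. -/
def degSetW (w : V → V → ℝ) (F : Finset V) : ℝ :=
  (∑ u, ∑ v, if u ∈ F ∨ v ∈ F then w u v else 0) / 2

/-- `Δ_k`: maximum weighted degree of a `k`-subset of vertices. -/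
noncomputable def deltaK (w : V → V → ℝ) (k : ℕ) : ℝ :=
  sSup ((degSetW w) '' {F : Finset V | F.card = k})

/-- The `k`-FT value of a distribution `D` over cuts against an oblivious adversary. -/
noncomputable def muD (w : V → V → ℝ) (k : ℕ) (D : Finset V → ℝ) : ℝ :=
  sInf ((fun F => ∑ S : Finset V, D S * cutMinusW w S F) '' {F : Finset V | F.card = k})

/-- The uniform distribution over all cuts. -/
def uniformD (V : Type*) [Fintype V] : Finset V → ℝ :=
  fun _ => 1 / 2 ^ (Fintype.card V)

def flipCut' (S : Finset V) (v : V) : Finset V :=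
  if v ∈ S then S.erase v else insert v S

lemma flipCut'_invol (u : V) : Function.Involutive (fun S : Finset V => flipCut' S u) := by
  intro S
  unfold flipCut'
  by_cases h : u ∈ S
  · simp [h, Finset.insert_erase h]
  · simp [h, Finset.erase_insert h]

lemma mem_flipCut'_self (u : V) (S : Finset V) : u ∈ flipCut' S u ↔ u ∉ S := by
  unfold flipCut'; by_cases h : u ∈ S <;> simp [h]

lemma mem_flipCut'_other {u v : V} (h : v ≠ u) (S : Finset V) : v ∈ flipCut' S u ↔ v ∈ S := by
  unfold flipCut'; by_cases hu : u ∈ S <;> simp [hu, h]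

lemma sum_flip' (u : V) (f : Finset V → ℝ) :
    ∑ S : Finset V, f (flipCut' S u) = ∑ S : Finset V, f S :=
  Equiv.sum_comp (Function.Involutive.toPerm _ (flipCut'_invol u)) f

lemma sum_indicator_cut' (u v : V) (huv : u ≠ v) (c : ℝ) :
    ∑ S : Finset V, (if u ∈ S ∧ v ∉ S then c else 0)
      = 2 ^ (Fintype.card V) / 4 * c := by
  have hvu : v ≠ u := huv.symm
  set A := ∑ S : Finset V, (if u ∈ S ∧ v ∉ S then c else 0) with hA
  set B := ∑ S : Finset V, (if u ∉ S ∧ v ∉ S then c else 0) with hB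
  set C := ∑ S : Finset V, (if u ∈ S ∧ v ∈ S then c else 0) with hC
  set D := ∑ S : Finset V, (if u ∉ S ∧ v ∈ S then c else 0) with hD
  have hAB : A = B := by
    rw [hA, hB, ← sum_flip' u (fun S => if u ∈ S ∧ v ∉ S then c else 0)]
    exact Finset.sum_congr rfl fun S _ => by
      simp [mem_flipCut'_self, mem_flipCut'_other hvu]
  have hCD : C = D := by
    rw [hC, hD, ← sum_flip' u (fun S => if u ∈ S ∧ v ∈ S then c else 0)]
    exact Finset.sum_congr rfl fun S _ => by
      simp [mem_flipCut'_self, mem_flipCut'_other hvu]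
  have hAC : A = C := by
    rw [hA, hC, ← sum_flip' v (fun S => if u ∈ S ∧ v ∉ S then c else 0)]
    exact Finset.sum_congr rfl fun S _ => by
      simp [mem_flipCut'_self, mem_flipCut'_other huv]
  have htot : A + B + C + D = 2 ^ (Fintype.card V) * c := by
    rw [hA, hB, hC, hD, ← Finset.sum_add_distrib, ← Finset.sum_add_distrib,
      ← Finset.sum_add_distrib]
    have hpt : ∀ S : Finset V,
        (((if u ∈ S ∧ v ∉ S then c else 0) + (if u ∉ S ∧ v ∉ S then c else 0))
          + (if u ∈ S ∧ v ∈ S then c else 0)) + (if u ∉ S ∧ v ∈ S then c else 0) = c := by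
      intro S; by_cases h1 : u ∈ S <;> by_cases h2 : v ∈ S <;> simp [h1, h2]
    rw [Finset.sum_congr rfl fun S _ => hpt S, Finset.sum_const, Finset.card_univ,
      Fintype.card_finset, nsmul_eq_mul]
    push_cast; ring
  linarith

lemma memsum' (T : Finset V) (h : V → ℝ) :
    ∑ x ∈ T, h x = ∑ x, if x ∈ T then h x else 0 := by
  rw [Finset.sum_ite_mem, Finset.univ_inter]

lemma sum_cut_all' (g : V → V → ℝ) (hg : ∀ v, g v v = 0) :
    ∑ S : Finset V, ∑ u ∈ S, ∑ v ∈ Sᶜ, g u v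
      = 2 ^ (Fintype.card V) / 4 * (∑ u, ∑ v, g u v) := by
  have h1 : ∀ S : Finset V, ∑ u ∈ S, ∑ v ∈ Sᶜ, g u v
      = ∑ u, ∑ v, (if u ∈ S ∧ v ∉ S then g u v else 0) := by
    intro S
    rw [memsum' S]
    apply Finset.sum_congr rfl
    intro u _
    by_cases h : u ∈ S
    · rw [if_pos h, memsum' Sᶜ]
      exact Finset.sum_congr rfl fun v _ => by simp [h]
    · rw [if_neg h]
      simp [h]
  rw [Finset.sum_congr rfl fun S _ => h1 S]
  have h2 : ∑ S : Finset V, ∑ u, ∑ v, (if u ∈ S ∧ v ∉ S then g u v else 0)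
      = ∑ u, ∑ v, ∑ S : Finset V, (if u ∈ S ∧ v ∉ S then g u v else 0) := by
    rw [Finset.sum_comm]
    exact Finset.sum_congr rfl fun u _ => Finset.sum_comm
  rw [h2]
  have h3 : ∀ u v : V, ∑ S : Finset V, (if u ∈ S ∧ v ∉ S then g u v else 0)
      = 2 ^ (Fintype.card V) / 4 * g u v := by
    intro u v
    by_cases h : u = v
    · subst h; simp [hg u]
    · exact sum_indicator_cut' u v h (g u v)
  rw [Finset.sum_congr rfl fun u _ => Finset.sum_congr rfl fun v _ => h3 u v]
  simp [Finset.mul_sum]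

lemma cut_le_half' (g : V → V → ℝ) (hsymg : ∀ u v, g u v = g v u)
    (hnng : ∀ u v, 0 ≤ g u v) (S : Finset V) :
    ∑ u ∈ S, ∑ v ∈ Sᶜ, g u v ≤ (∑ u, ∑ v, g u v) / 2 := by
  have hsplit : ∀ h : V → ℝ, ∑ u, h u = ∑ u ∈ S, h u + ∑ u ∈ Sᶜ, h u :=
    fun h => (Finset.sum_add_sum_compl S h).symm
  have h1 : ∑ u, ∑ v, g u v
      = (∑ u ∈ S, ∑ v ∈ S, g u v + ∑ u ∈ S, ∑ v ∈ Sᶜ, g u v)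
        + (∑ u ∈ Sᶜ, ∑ v ∈ S, g u v + ∑ u ∈ Sᶜ, ∑ v ∈ Sᶜ, g u v) := by
    rw [hsplit (fun u => ∑ v, g u v)]
    congr 1
    · rw [← Finset.sum_add_distrib]
      exact Finset.sum_congr rfl fun u _ => hsplit (g u)
    · rw [← Finset.sum_add_distrib]
      exact Finset.sum_congr rfl fun u _ => hsplit (g u)
  have h2 : ∑ u ∈ Sᶜ, ∑ v ∈ S, g u v = ∑ u ∈ S, ∑ v ∈ Sᶜ, g u v := by
    rw [Finset.sum_comm]
    exact Finset.sum_congr rfl fun u _ => Finset.sum_congr rfl fun v _ => hsymg _ _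
  have h3 : 0 ≤ ∑ u ∈ S, ∑ v ∈ S, g u v :=
    Finset.sum_nonneg fun u _ => Finset.sum_nonneg fun v _ => hnng u v
  have h4 : 0 ≤ ∑ u ∈ Sᶜ, ∑ v ∈ Sᶜ, g u v :=
    Finset.sum_nonneg fun u _ => Finset.sum_nonneg fun v _ => hnng u v
  linarith


lemma totalW_sub_degSetW (w : V → V → ℝ) (F : Finset V) :
    totalW w - degSetW w F
      = (∑ u, ∑ v, (if u ∉ F ∧ v ∉ F then w u v else 0)) / 2 := by
  unfold totalW degSetW
  rw [← sub_div]
  congr 1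
  rw [← Finset.sum_sub_distrib]
  apply Finset.sum_congr rfl; intro u _
  rw [← Finset.sum_sub_distrib]
  apply Finset.sum_congr rfl; intro v _
  by_cases h : u ∈ F ∨ v ∈ F
  · have h2 : ¬(u ∉ F ∧ v ∉ F) := by tauto
    simp [h, h2]
  · push_neg at h
    simp [h.1, h.2]

theorem stmt_12 (w : V → V → ℝ) (hsym : ∀ u v, w u v = w v u)
    (hdiag : ∀ v, w v v = 0) (hnn : ∀ u v, 0 ≤ w u v)
    (k : ℕ) (hk : 0 < k) (hkcard : k ≤ Fintype.card V) :
    (∀ F : Finset V, F.card = k →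
        (∑ S : Finset V, uniformD V S * cutMinusW w S F
            = (totalW w - degSetW w F) / 2) ∧
        (totalW w - deltaK w k) / 2
            ≤ ∑ S : Finset V, uniformD V S * cutMinusW w S F) ∧
      (sSup ((fun D => muD w k D) ''
          {D : Finset V → ℝ | (∀ S, 0 ≤ D S) ∧ ∑ S : Finset V, D S = 1})) / 2
        ≤ muD w k (uniformD V) := by
  have h2n : (2:ℝ) ^ (Fintype.card V) ≠ 0 := by positivity
  -- per-F expectation
  have key : ∀ F : Finset V, ∑ S : Finset V, uniformD V S * cutMinusW w S F
      = (totalW w - degSetW w F) / 2 := by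
    intro F
    set g : V → V → ℝ := fun u v => if u ∉ F ∧ v ∉ F then w u v else 0 with hgdef
    have hgd : ∀ v, g v v = 0 := by
      intro v; by_cases h : v ∈ F <;> simp [hgdef, h, hdiag v]
    have hsumS : ∑ S : Finset V, cutMinusW w S F
        = 2 ^ (Fintype.card V) / 4 * (∑ u, ∑ v, g u v) := sum_cut_all' g hgd
    calc ∑ S : Finset V, uniformD V S * cutMinusW w S F
        = (1 / 2 ^ (Fintype.card V)) * ∑ S : Finset V, cutMinusW w S F := by
          rw [Finset.mul_sum]; rfl
      _ = (∑ u, ∑ v, g u v) / 4 := by rw [hsumS]; field_simp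
      _ = (totalW w - degSetW w F) / 2 := by rw [totalW_sub_degSetW]; ring
  -- cut value bound
  have hcutle : ∀ (S F : Finset V), cutMinusW w S F ≤ totalW w - degSetW w F := by
    intro S F
    rw [totalW_sub_degSetW]
    exact cut_le_half' _
      (fun u v => by by_cases h1 : u ∈ F <;> by_cases h2 : v ∈ F <;>
        simp [h1, h2, hsym u v])
      (fun u v => by split_ifs <;> simp [hnn u v]) S
  -- delta_k attained
  have hne : ({F : Finset V | F.card = k}).Nonempty := by
    obtain ⟨F, _, hcard⟩ := Finset.exists_subset_card_eq (s := (Finset.univ : Finset V)) (n := k)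
      (by rwa [Finset.card_univ])
    exact ⟨F, hcard⟩
  obtain ⟨F0, hF0k, hF0⟩ : ∃ F : Finset V, F.card = k ∧ degSetW w F = deltaK w k := by
    have hmem := Set.Nonempty.csSup_mem (hne.image (degSetW w)) (Set.toFinite _)
    obtain ⟨F, hF, hval⟩ := hmem
    exact ⟨F, hF, hval⟩
  have hle_delta : ∀ F : Finset V, F.card = k → degSetW w F ≤ deltaK w k :=
    fun F hF => le_csSup (Set.toFinite _).bddAbove ⟨F, hF, rfl⟩
  have hmuU : muD w k (uniformD V) = (totalW w - deltaK w k) / 2 := by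
    unfold muD
    apply le_antisymm
    · apply csInf_le (Set.toFinite _).bddBelow
      refine ⟨F0, hF0k, ?_⟩
      show ∑ S : Finset V, uniformD V S * cutMinusW w S F0 = (totalW w - deltaK w k) / 2
      rw [key F0, hF0]
    · apply le_csInf (hne.image _)
      rintro x ⟨F, hF, rfl⟩
      show (totalW w - deltaK w k) / 2 ≤ ∑ S : Finset V, uniformD V S * cutMinusW w S F
      rw [key F]
      have := hle_delta F hF
      linarith
  refine ⟨fun F hF => ⟨key F, ?_⟩, ?_⟩
  · rw [key F]
    have := hle_delta F hF
    linarith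
  · have hub : ∀ x ∈ ((fun D => muD w k D) ''
        {D : Finset V → ℝ | (∀ S, 0 ≤ D S) ∧ ∑ S : Finset V, D S = 1}),
        x ≤ totalW w - deltaK w k := by
      rintro x ⟨D, ⟨hDnn, hDsum⟩, rfl⟩
      calc muD w k D ≤ ∑ S : Finset V, D S * cutMinusW w S F0 :=
            csInf_le (Set.toFinite _).bddBelow ⟨F0, hF0k, rfl⟩
        _ ≤ ∑ S : Finset V, D S * (totalW w - degSetW w F0) :=
            Finset.sum_le_sum fun S _ =>
              mul_le_mul_of_nonneg_left (hcutle S F0) (hDnn S)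
        _ = totalW w - deltaK w k := by rw [← Finset.sum_mul, hDsum, hF0, one_mul]
    have hDne : ((fun D => muD w k D) ''
        {D : Finset V → ℝ | (∀ S, 0 ≤ D S) ∧ ∑ S : Finset V, D S = 1}).Nonempty := by
      refine ⟨muD w k (uniformD V), ⟨uniformD V, ⟨?_, ?_⟩, rfl⟩⟩
      · intro S; unfold uniformD; positivity
      · unfold uniformD
        rw [Finset.sum_const, Finset.card_univ, Fintype.card_finset, nsmul_eq_mul]
        push_cast
        field_simp
    have := csSup_le hDne hub
    rw [hmuU]
    linarith
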